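/- Let M ⊆ B(H) be a von Neumann algebra and V a quantum relation on M ⊆ B(H). Define φ_V : Proj(M) → Proj(M) by φ_V(q) = ⋁_{a∈V} s_ℓ^M(aq). Then orc(V) = V_{φ_V}, where V_{φ_V} = {a ∈ B(H) : s_ℓ^M(aq) ≤ φ_V(q) for all projections q ∈ M}. Consequently, a quantum relation V on M ⊆ B(H) is operator reflexive if and only if V = V_φ for some map φ : Proj(M) → Proj(M), where V_φ = {a ∈ B(H) : s_ℓ^M(aq) ≤ φ(q) for all projections q ∈ M}. -/

import Mathlib

open scoped ENNReal NNReal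

noncomputable section

universe u

namespace QCG

/-- The weak* (σ-weak) topology on `B(H)`: the topology induced by the functionals
`x ↦ ∑' n, ⟪x (ξ n), η n⟫` indexed by pairs of square-summable sequences `ξ, η : ℕ → H`. -/
def sigmaWeak (H : Type u) [NormedAddCommGroup H] [InnerProductSpace ℂ H] :
    TopologicalSpace (H →L[ℂ] H) :=
  TopologicalSpace.induced
    (fun a (p : {xe : (ℕ → H) × (ℕ → H) //
        Summable (fun n => ‖xe.1 n‖ ^ 2) ∧ Summable (fun n => ‖xe.2 n‖ ^ 2)}) =>
      (∑' n, (inner ℂ (a (p.1.1 n)) (p.1.2 n) : ℂ)))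
    inferInstance

variable {H : Type u} [NormedAddCommGroup H] [InnerProductSpace ℂ H] [CompleteSpace H]

/-- A set of operators is weak*-closed. -/
def IsWeakStarClosed (V : Set (H →L[ℂ] H)) : Prop :=
  @IsClosed _ (sigmaWeak H) V

/-- The weak*-closure of a set of operators. -/
def wclosure (S : Set (H →L[ℂ] H)) : Set (H →L[ℂ] H) :=
  @closure _ (sigmaWeak H) S

/-- A quantum relation on `M ⊆ B(H)`: a weak*-closed linear subspace of `B(H)` which is a
bimodule over the commutant `M'`. -/
structure IsQRel (M : VonNeumannAlgebra H) (V : Set (H →L[ℂ] H)) : Prop where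
  zero_mem : (0 : H →L[ℂ] H) ∈ V
  add_mem : ∀ a b : H →L[ℂ] H, a ∈ V → b ∈ V → a + b ∈ V
  smul_mem : ∀ (c : ℂ) (a : H →L[ℂ] H), a ∈ V → c • a ∈ V
  weakStarClosed : IsWeakStarClosed V
  bimodule : ∀ x ∈ M.commutant, ∀ v ∈ V, ∀ y ∈ M.commutant, x * v * y ∈ V

/-- An (orthogonal) projection belonging to the von Neumann algebra `M`. -/
def IsProjectionIn (M : VonNeumannAlgebra H) (p : H →L[ℂ] H) : Prop :=
  p ∈ M ∧ IsIdempotentElem p ∧ IsSelfAdjoint p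

/-- `s` is the left `M`-support `s_ℓ^M(a)` of `a`: the smallest projection `q ∈ M` with
`q * a = a`.  (For projections `s, p`, the inequality `s ≤ p` is expressed as `p * s = s`.) -/
def IsLeftSupport (M : VonNeumannAlgebra H) (a s : H →L[ℂ] H) : Prop :=
  IsProjectionIn M s ∧ s * a = a ∧
    ∀ p : H →L[ℂ] H, IsProjectionIn M p → p * a = a → p * s = s

/-- `s` is the `M`-support `s^M(ξ)` of the vector `ξ`: the smallest projection `q ∈ M`
with `q ξ = ξ`. -/
def IsVectorSupport (M : VonNeumannAlgebra H) (ξ : H) (s : H →L[ℂ] H) : Prop :=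
  IsProjectionIn M s ∧ s ξ = ξ ∧
    ∀ p : H →L[ℂ] H, IsProjectionIn M p → p ξ = ξ → p * s = s

/-- A quantum coarse structure on `M ⊆ B(H)`: a family of quantum relations containing the
diagonal `M'` and closed under subrelations, adjoints, (weak*-closures of) sums, and
(weak*-closed spans of) products. -/
structure IsQCoarse (M : VonNeumannAlgebra H) (𝒱 : Set (Set (H →L[ℂ] H))) : Prop where
  qrel : ∀ V ∈ 𝒱, IsQRel M V
  diag_mem : (M.commutant : Set (H →L[ℂ] H)) ∈ 𝒱
  subrel_mem : ∀ V₁ ∈ 𝒱, ∀ V₂ : Set (H →L[ℂ] H), IsQRel M V₂ → V₂ ⊆ V₁ → V₂ ∈ 𝒱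
  star_mem : ∀ V ∈ 𝒱, (star '' V) ∈ 𝒱
  add_mem : ∀ V₁ ∈ 𝒱, ∀ V₂ ∈ 𝒱,
    wclosure {v : H →L[ℂ] H | ∃ a ∈ V₁, ∃ b ∈ V₂, v = a + b} ∈ 𝒱
  mul_mem : ∀ V₁ ∈ 𝒱, ∀ V₂ ∈ 𝒱,
    wclosure ((Submodule.span ℂ {v : H →L[ℂ] H | ∃ a ∈ V₁, ∃ b ∈ V₂, v = a * b} :
      Submodule ℂ (H →L[ℂ] H)) : Set (H →L[ℂ] H)) ∈ 𝒱

/-- `V_φ = {a ∈ B(H) : s_ℓ^M(a q) ≤ φ(q) for every projection q ∈ M}`. -/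
def Vphi (M : VonNeumannAlgebra H) (φ : (H →L[ℂ] H) → (H →L[ℂ] H)) : Set (H →L[ℂ] H) :=
  {a | ∀ q : H →L[ℂ] H, IsProjectionIn M q →
      ∀ s : H →L[ℂ] H, IsLeftSupport M (a * q) s → φ q * s = s}

/-- `s = φ_V(q) = ⋁_{a ∈ V} s_ℓ^M(a q)`, i.e. `s` is the smallest projection in `M` with
`s (a q) = a q` for every `a ∈ V`. -/
def IsJoinOfLeftSupports (M : VonNeumannAlgebra H) (V : Set (H →L[ℂ] H))
    (q s : H →L[ℂ] H) : Prop :=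
  IsProjectionIn M s ∧ (∀ a ∈ V, s * (a * q) = a * q) ∧
    ∀ r : H →L[ℂ] H, IsProjectionIn M r → (∀ a ∈ V, r * (a * q) = a * q) → r * s = s

/-- The operator reflexive closure of `V` (for an `M'`-bimodule it suffices to use
projections in `M`):
`orc(V) = {a : for all projections p, q ∈ M, p V q = {0} implies p a q = 0}`. -/
def orcSet (M : VonNeumannAlgebra H) (V : Set (H →L[ℂ] H)) : Set (H →L[ℂ] H) :=
  {a | ∀ p q : H →L[ℂ] H, IsProjectionIn M p → IsProjectionIn M q →
      (∀ v ∈ V, p * v * q = 0) → p * a * q = 0}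

/-! ### Auxiliary constructions: projections onto closed spans -/

/-- The closure of the span of a set of vectors. -/
def clspan (S : Set H) : Submodule ℂ H := (Submodule.span ℂ S).topologicalClosure

instance clspan_complete (S : Set H) : CompleteSpace (clspan S) :=
  (Submodule.isClosed_topologicalClosure _).completeSpace_coe

/-- The orthogonal projection onto the closed span of `S`, as an operator `H →L[ℂ] H`. -/
def projS (S : Set H) : H →L[ℂ] H :=
  (clspan S).subtypeL ∘L (clspan S).orthogonalProjectionOnto

@[simp] lemma projS_apply (S : Set H) (ξ : H) :
    projS S ξ = (clspan S).orthogonalProjectionOnto ξ := rfl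

lemma projS_apply_mem (S : Set H) (ξ : H) : projS S ξ ∈ clspan S :=
  ((clspan S).orthogonalProjectionOnto ξ).2

lemma projS_apply_of_mem {S : Set H} {ξ : H} (h : ξ ∈ clspan S) : projS S ξ = ξ :=
  Submodule.starProjection_eq_self_iff.2 h

lemma subset_clspan (S : Set H) : S ⊆ (clspan S : Set H) :=
  fun _ hy => Submodule.le_topologicalClosure _ (Submodule.subset_span hy)

lemma projS_selfAdjoint (S : Set H) : IsSelfAdjoint (projS S) :=
  isSelfAdjoint_starProjection _

lemma projS_idem (S : Set H) : IsIdempotentElem (projS S) := by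
  ext ξ
  simp only [ContinuousLinearMap.mul_apply]
  exact projS_apply_of_mem (projS_apply_mem S ξ)

lemma projS_apply_perp {S : Set H} {v : H} (h : v ∈ (clspan S)ᗮ) : projS S v = 0 := by
  rw [projS_apply, Submodule.orthogonalProjectionOnto_apply_of_mem_orthogonal h,
    ZeroMemClass.coe_zero]

lemma fixes_clspan {S : Set H} {r : H →L[ℂ] H} (hr : ∀ y ∈ S, r y = y) :
    ∀ ξ ∈ clspan S, r ξ = ξ := by
  have h1 : clspan S ≤ LinearMap.ker ((r - 1 : H →L[ℂ] H) : H →ₗ[ℂ] H) := by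
    apply Submodule.topologicalClosure_minimal
    · rw [Submodule.span_le]
      intro y hy
      simp [LinearMap.mem_ker, hr y hy]
    · exact ContinuousLinearMap.isClosed_ker (r - 1)
  intro ξ hξ
  have h2 := h1 hξ
  simp only [LinearMap.mem_ker, ContinuousLinearMap.coe_coe, ContinuousLinearMap.sub_apply,
    ContinuousLinearMap.one_apply, sub_eq_zero] at h2
  exact h2

lemma mul_projS_of_fixes {S : Set H} {r : H →L[ℂ] H} (hr : ∀ y ∈ S, r y = y) :
    r * projS S = projS S := by
  ext ξ
  exact fixes_clspan hr _ (projS_apply_mem S ξ)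

lemma clspan_maps {S : Set H} {a : H →L[ℂ] H} (ha : ∀ y ∈ S, a y ∈ clspan S) :
    ∀ ξ ∈ clspan S, a ξ ∈ clspan S := by
  have hle : clspan S ≤ (clspan S).comap (a : H →ₗ[ℂ] H) := by
    apply Submodule.topologicalClosure_minimal
    · rw [Submodule.span_le]
      exact ha
    · exact IsClosed.preimage a.continuous (Submodule.isClosed_topologicalClosure _)
  exact fun ξ hξ => hle hξ

lemma projS_commute {S : Set H} {a : H →L[ℂ] H}
    (ha : ∀ ξ ∈ clspan S, a ξ ∈ clspan S) (ha' : ∀ ξ ∈ clspan S, (star a) ξ ∈ clspan S) :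
    a * projS S = projS S * a := by
  ext ξ
  simp only [ContinuousLinearMap.mul_apply]
  have hw : ξ - projS S ξ ∈ (clspan S)ᗮ := (clspan S).sub_starProjection_mem_orthogonal ξ
  have hperp : a (ξ - projS S ξ) ∈ (clspan S)ᗮ := by
    rw [Submodule.mem_orthogonal']
    intro u hu
    have h1 : (inner ℂ (a (ξ - projS S ξ)) u : ℂ) = inner ℂ (ξ - projS S ξ) ((star a) u) := by
      rw [ContinuousLinearMap.star_eq_adjoint, ContinuousLinearMap.adjoint_inner_right]
    rw [h1]
    exact (Submodule.mem_orthogonal' _ _).1 hw _ (ha' u hu)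
  have hsplit : a ξ = a (projS S ξ) + a (ξ - projS S ξ) := by
    rw [← map_add, add_sub_cancel]
  rw [show projS S (a ξ) = projS S (a (projS S ξ) + a (ξ - projS S ξ)) by rw [← hsplit],
    map_add, projS_apply_of_mem (ha _ (projS_apply_mem S ξ)), projS_apply_perp hperp, add_zero]

lemma projS_mem (M : VonNeumannAlgebra H) {S : Set H}
    (hS : ∀ x ∈ M.commutant, ∀ y ∈ S, x y ∈ S) : projS S ∈ M := by
  rw [← VonNeumannAlgebra.commutant_commutant M, VonNeumannAlgebra.mem_commutant_iff]
  intro g hg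
  exact projS_commute (clspan_maps fun y hy => subset_clspan S (hS g hg y hy))
    (clspan_maps fun y hy => subset_clspan S (hS (star g) (star_mem hg) y hy))

lemma projS_isProjectionIn (M : VonNeumannAlgebra H) {S : Set H}
    (hS : ∀ x ∈ M.commutant, ∀ y ∈ S, x y ∈ S) : IsProjectionIn M (projS S) :=
  ⟨projS_mem M hS, projS_idem S, projS_selfAdjoint S⟩

/-! ### The canonical left support and join of left supports -/

/-- Generating set for the left `M`-support of `b`. -/
def suppSet (M : VonNeumannAlgebra H) (b : H →L[ℂ] H) : Set H :=
  {y | ∃ x ∈ M.commutant, ∃ ξ, y = x (b ξ)}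

lemma suppSet_invariant (M : VonNeumannAlgebra H) (b : H →L[ℂ] H) :
    ∀ x ∈ M.commutant, ∀ y ∈ suppSet M b, x y ∈ suppSet M b := by
  rintro x hx y ⟨x', hx', ξ, rfl⟩
  exact ⟨x * x', mul_mem hx hx', ξ, by simp [ContinuousLinearMap.mul_apply]⟩

lemma isLeftSupport_projS (M : VonNeumannAlgebra H) (b : H →L[ℂ] H) :
    IsLeftSupport M b (projS (suppSet M b)) := by
  refine ⟨projS_isProjectionIn M (suppSet_invariant M b), ?_, ?_⟩
  · ext ξ
    simp only [ContinuousLinearMap.mul_apply]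
    exact projS_apply_of_mem (subset_clspan _ ⟨1, one_mem _, ξ, by simp⟩)
  · intro p hp hpb
    apply mul_projS_of_fixes
    rintro y ⟨x, hx, ξ, rfl⟩
    have hcomm : p * x = x * p := VonNeumannAlgebra.mem_commutant_iff.mp hx p hp.1
    have hfix : p (b ξ) = b ξ := by
      have := ContinuousLinearMap.ext_iff.1 hpb ξ
      simpa [ContinuousLinearMap.mul_apply] using this
    calc p (x (b ξ)) = (p * x) (b ξ) := rfl
      _ = (x * p) (b ξ) := by rw [hcomm]
      _ = x (p (b ξ)) := rfl
      _ = x (b ξ) := by rw [hfix]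

/-- Generating set for the join of left supports `⋁_{v ∈ V} s_ℓ^M(v q)`. -/
def joinSet (M : VonNeumannAlgebra H) (V : Set (H →L[ℂ] H)) (q : H →L[ℂ] H) : Set H :=
  {y | ∃ v ∈ V, ∃ ξ, y = v (q ξ)}

lemma joinSet_invariant {M : VonNeumannAlgebra H} {V : Set (H →L[ℂ] H)} (hV : IsQRel M V)
    (q : H →L[ℂ] H) :
    ∀ x ∈ M.commutant, ∀ y ∈ joinSet M V q, x y ∈ joinSet M V q := by
  rintro x hx y ⟨v, hv, ξ, rfl⟩
  refine ⟨x * v * 1, hV.bimodule x hx v hv 1 (one_mem _), ξ, ?_⟩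
  simp [ContinuousLinearMap.mul_apply]

lemma isJoin_projS {M : VonNeumannAlgebra H} {V : Set (H →L[ℂ] H)} (hV : IsQRel M V)
    (q : H →L[ℂ] H) : IsJoinOfLeftSupports M V q (projS (joinSet M V q)) := by
  refine ⟨projS_isProjectionIn M (joinSet_invariant hV q), ?_, ?_⟩
  · intro v hv
    ext ξ
    simp only [ContinuousLinearMap.mul_apply]
    exact projS_apply_of_mem (subset_clspan _ ⟨v, hv, ξ, rfl⟩)
  · intro r _ hfix
    apply mul_projS_of_fixes
    rintro y ⟨v, hv, ξ, rfl⟩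
    have := ContinuousLinearMap.ext_iff.1 (hfix v hv) ξ
    simpa [ContinuousLinearMap.mul_apply] using this

/-! ### Uniqueness lemmas and complements of projections -/

lemma proj_eq_of_mutual {s s' : H →L[ℂ] H} (hs : IsSelfAdjoint s) (hs' : IsSelfAdjoint s')
    (h1 : s * s' = s') (h2 : s' * s = s) : s = s' :=
  calc s = s' * s := h2.symm
    _ = star s' * star s := by rw [hs.star_eq, hs'.star_eq]
    _ = star (s * s') := (star_mul s s').symm
    _ = star s' := by rw [h1]
    _ = s' := hs'.star_eq

lemma join_unique {M : VonNeumannAlgebra H} {V : Set (H →L[ℂ] H)} {q s s' : H →L[ℂ] H}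
    (hs : IsJoinOfLeftSupports M V q s) (hs' : IsJoinOfLeftSupports M V q s') : s = s' :=
  proj_eq_of_mutual hs.1.2.2 hs'.1.2.2 (hs'.2.2 s hs.1 hs.2.1) (hs.2.2 s' hs'.1 hs'.2.1)

lemma one_sub_proj {M : VonNeumannAlgebra H} {s : H →L[ℂ] H} (hs : IsProjectionIn M s) :
    IsProjectionIn M (1 - s) :=
  ⟨sub_mem (one_mem _) hs.1, hs.2.1.one_sub, (IsSelfAdjoint.one (H →L[ℂ] H)).sub hs.2.2⟩

/-- For a quantum relation `V` on `M ⊆ B(H)`, `orc(V) = V_{φ_V}` where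
`φ_V(q) = ⋁_{a ∈ V} s_ℓ^M(a q)`; consequently `V` is operator reflexive if and only if
`V = V_φ` for some map `φ : Proj(M) → Proj(M)`. -/
theorem statement1 (M : VonNeumannAlgebra H) (V : Set (H →L[ℂ] H)) (hV : IsQRel M V) :
    (orcSet M V =
      {a : H →L[ℂ] H | ∀ q : H →L[ℂ] H, IsProjectionIn M q →
        ∀ s : H →L[ℂ] H, IsJoinOfLeftSupports M V q s →
          ∀ t : H →L[ℂ] H, IsLeftSupport M (a * q) t → s * t = t}) ∧
    (orcSet M V = V ↔
      ∃ φ : (H →L[ℂ] H) → (H →L[ℂ] H),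
        (∀ q : H →L[ℂ] H, IsProjectionIn M q → IsProjectionIn M (φ q)) ∧
        V = Vphi M φ) := by
  have key : orcSet M V =
      {a : H →L[ℂ] H | ∀ q : H →L[ℂ] H, IsProjectionIn M q →
        ∀ s : H →L[ℂ] H, IsJoinOfLeftSupports M V q s →
          ∀ t : H →L[ℂ] H, IsLeftSupport M (a * q) t → s * t = t} := by
    ext a
    constructor
    · intro ha q hq s hs t ht
      have h0 : (1 - s) * a * q = 0 := by
        apply ha (1 - s) q (one_sub_proj hs.1) hq
        intro v hv
        rw [mul_assoc, sub_mul, one_mul, hs.2.1 v hv, sub_self]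
      rw [mul_assoc, sub_mul, one_mul, sub_eq_zero] at h0
      exact ht.2.2 s hs.1 h0.symm
    · intro ha p q hp hq hpVq
      have hs := isJoin_projS hV q
      have ht := isLeftSupport_projS M (a * q)
      have hst : projS (joinSet M V q) * projS (suppSet M (a * q)) =
          projS (suppSet M (a * q)) := ha q hq _ hs _ ht
      have hps : p * projS (joinSet M V q) = 0 := by
        have h1 : (1 - p) * projS (joinSet M V q) = projS (joinSet M V q) := by
          apply hs.2.2 (1 - p) (one_sub_proj hp)
          intro v hv
          rw [sub_mul, one_mul, ← mul_assoc, hpVq v hv, sub_zero]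
        rw [sub_mul, one_mul, sub_eq_self] at h1
        exact h1
      have hpt : p * projS (suppSet M (a * q)) = 0 := by
        rw [← hst, ← mul_assoc, hps, zero_mul]
      calc p * a * q = p * (a * q) := by rw [mul_assoc]
        _ = p * (projS (suppSet M (a * q)) * (a * q)) := by rw [ht.2.1]
        _ = (p * projS (suppSet M (a * q))) * (a * q) := by rw [mul_assoc]
        _ = 0 := by rw [hpt, zero_mul]
  refine ⟨key, ?_, ?_⟩
  · intro horc
    refine ⟨fun q => projS (joinSet M V q),
      fun q _ => projS_isProjectionIn M (joinSet_invariant hV q), ?_⟩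
    have hk := Set.ext_iff.mp key
    have ho := Set.ext_iff.mp horc
    ext a
    constructor
    · intro haV q hq t' ht'
      exact ((hk a).mp ((ho a).mpr haV)) q hq _ (isJoin_projS hV q) t' ht'
    · intro ha
      refine (ho a).mp ((hk a).mpr ?_)
      intro q hq s hs t ht
      rw [join_unique hs (isJoin_projS hV q)]
      exact ha q hq t ht
  · rintro ⟨φ, hφ, hVeq⟩
    subst hVeq
    ext a
    constructor
    · intro ha q hq t ht
      have hsupp : φ q * (a * q) = a * q := by
        have h0 : (1 - φ q) * a * q = 0 := by
          apply ha (1 - φ q) q (one_sub_proj (hφ q hq)) hq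
          intro v hv
          have ht' := isLeftSupport_projS M (v * q)
          have h2 : φ q * (v * q) = v * q := by
            calc φ q * (v * q)
                = φ q * (projS (suppSet M (v * q)) * (v * q)) := by rw [ht'.2.1]
              _ = (φ q * projS (suppSet M (v * q))) * (v * q) := by rw [mul_assoc]
              _ = projS (suppSet M (v * q)) * (v * q) := by rw [hv q hq _ ht']
              _ = v * q := ht'.2.1
          rw [mul_assoc, sub_mul, one_mul, h2, sub_self]
        rw [mul_assoc, sub_mul, one_mul, sub_eq_zero] at h0
        exact h0.symm
      exact ht.2.2 (φ q) (hφ q hq) hsupp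
    · intro ha p q _ _ h
      exact h a ha

end QCG
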